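/- (n-party fidelity bound, abstract version) Fix m ≥ 0 and a finite-dimensional complex Hilbert space. Suppose for every binary word u of length at most m we are given an orthogonal projection P⁽ᵘ⁾, such that for every word u of length strictly less than m: P⁽ᵘ⁰⁾P⁽ᵘ¹⁾ = P⁽ᵘ¹⁾P⁽ᵘ⁰⁾ = P⁽ᵘ⁾. Then for every density operator ρ (positive semidefinite with trace 1), tr(ρ P⁽∅⁾) ≥ Σ_{u ∈ {0,1}^m} tr(ρ P⁽ᵘ⁾) − (2^m − 1). -/

import Mathlib

open Matrix
open scoped BigOperators ComplexOrder

noncomputable section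

/-- The binary word of length `m` representing `n` (most significant bit first),
so that lexicographic order of words corresponds to numerical order of `n < 2^m`. -/
def wordOf (m n : ℕ) : List Bool :=
  (List.range m).map (fun i => Nat.testBit n (m - 1 - i))

lemma trace_psd_nonneg {n : Type*} [Fintype n] [DecidableEq n] {A : Matrix n n ℂ} (hA : A.PosSemidef) :
    0 ≤ A.trace := by
  exact hA.trace_nonneg

lemma trace_mul_psd_nonneg {n : Type*} [Fintype n] [DecidableEq n]
    {ρ M : Matrix n n ℂ} (hρ : ρ.PosSemidef) (hM : M.PosSemidef) :
    0 ≤ (ρ * M).trace := by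
  open scoped MatrixOrder in
  obtain ⟨B, rfl⟩ := CStarAlgebra.nonneg_iff_eq_star_mul_self.mp
    (Matrix.nonneg_iff_posSemidef.mpr hρ)
  rw [star_eq_conjTranspose, mul_assoc, Matrix.trace_mul_comm]
  exact trace_psd_nonneg (hM.mul_mul_conjTranspose_same B)

/-- key sibling inequality -/
lemma key_ineq {n : Type*} [Fintype n] [DecidableEq n]
    {ρ Pu P0 P1 : Matrix n n ℂ} (hρ : ρ.PosSemidef) (hρtr : ρ.trace = 1)
    (h0H : P0ᴴ = P0) (h1H : P1ᴴ = P1)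
    (h0 : P0 * P0 = P0) (h1 : P1 * P1 = P1)
    (h01 : P0 * P1 = Pu) (h10 : P1 * P0 = Pu) :
    (ρ * P0).trace.re + (ρ * P1).trace.re ≤ (ρ * Pu).trace.re + 1 := by
  set M : Matrix n n ℂ := (1 - P0) * (1 - P1) with hMdef
  have hMeq : M = 1 - P0 - P1 + Pu := by
    rw [hMdef]; simp only [sub_mul, mul_sub, one_mul, mul_one, h01]; abel
  have hMH : Mᴴ = M := by
    rw [hMeq]
    simp only [conjTranspose_add, conjTranspose_sub, conjTranspose_one, h0H, h1H,
      ← h01, conjTranspose_mul, h0H, h1H, h10]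
  have hMM : M * M = M := by
    have hcomm : (1 - P1) * (1 - P0) = M := by
      rw [hMeq]; simp only [sub_mul, mul_sub, one_mul, mul_one, h10]; abel
    calc M * M = (1 - P0) * ((1 - P1) * (1 - P0)) * (1 - P1) := by
          rw [hMdef]; noncomm_ring
      _ = (1 - P0) * ((1 - P0) * (1 - P1)) * (1 - P1) := by rw [hcomm, hMdef]
      _ = ((1 - P0) * (1 - P0)) * ((1 - P1) * (1 - P1)) := by noncomm_ring
      _ = (1 - P0) * (1 - P1) := by
          have e0 : (1 - P0) * (1 - P0) = (1 - P0) := by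
            simp only [sub_mul, mul_sub, one_mul, mul_one, h0]; abel
          have e1 : (1 - P1) * (1 - P1) = (1 - P1) := by
            simp only [sub_mul, mul_sub, one_mul, mul_one, h1]; abel
          rw [e0, e1]
  have hMpsd : M.PosSemidef := by
    have : M = Mᴴ * M := by rw [hMH, hMM]
    rw [this]
    exact posSemidef_conjTranspose_mul_self M
  have htr : 0 ≤ (ρ * M).trace := trace_mul_psd_nonneg hρ hMpsd
  have hexp : (ρ * M).trace = 1 - (ρ * P0).trace - (ρ * P1).trace + (ρ * Pu).trace := by
    rw [hMeq, mul_add, mul_sub, mul_sub, mul_one, trace_add, trace_sub, trace_sub, hρtr]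
  have hre : 0 ≤ ((ρ * M).trace).re := (Complex.nonneg_iff.mp htr).1
  rw [hexp] at hre
  simp only [Complex.add_re, Complex.sub_re, Complex.one_re] at hre
  linarith

lemma wordOf_succ (j k : ℕ) :
    wordOf (j + 1) k = wordOf j (k / 2) ++ [Nat.testBit k 0] := by
  unfold wordOf
  rw [List.range_succ, List.map_append]
  congr 1
  · apply List.map_congr_left
    intro i hi
    rw [List.mem_range] at hi
    have : j + 1 - 1 - i = (j - 1 - i) + 1 := by omega
    rw [this, Nat.testBit_add_one]
  · simp

lemma wordOf_two_mul (j q : ℕ) : wordOf (j + 1) (2 * q) = wordOf j q ++ [false] := by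
  rw [wordOf_succ]
  congr 2
  · omega
  · simp [Nat.testBit, Nat.mul_mod_right]

lemma wordOf_two_mul_add_one (j q : ℕ) :
    wordOf (j + 1) (2 * q + 1) = wordOf j q ++ [true] := by
  rw [wordOf_succ]
  congr 2
  · omega
  · simp [Nat.testBit]

lemma sum_range_two_mul (N : ℕ) (f : ℕ → ℝ) :
    ∑ k ∈ Finset.range (2 * N), f k = ∑ q ∈ Finset.range N, (f (2 * q) + f (2 * q + 1)) := by
  induction N with
  | zero => simp
  | succ N ih =>
    rw [Nat.mul_succ, Finset.sum_range_succ, Finset.sum_range_succ, Finset.sum_range_succ, ih]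
    ring

lemma wordOf_length (j k : ℕ) : (wordOf j k).length = j := by simp [wordOf]

/-- n-party fidelity bound, abstract version: given orthogonal
projections `P⁽ᵘ⁾` for all binary words `u` of length at most `m` with the sibling
relations, for every density operator `ρ`,
`tr(ρP⁽∅⁾) ≥ Σ_{u ∈ {0,1}^m} tr(ρP⁽ᵘ⁾) − (2^m − 1)`. -/
theorem stmt14 {n : Type*} [Fintype n] [DecidableEq n] (m : ℕ)
    (P : List Bool → Matrix n n ℂ)
    (hproj : ∀ u : List Bool, u.length ≤ m → (P u)ᴴ = P u ∧ P u * P u = P u)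
    (hsib : ∀ u : List Bool, u.length < m →
      P (u ++ [false]) * P (u ++ [true]) = P u ∧
      P (u ++ [true]) * P (u ++ [false]) = P u)
    (ρ : Matrix n n ℂ) (hρ : ρ.PosSemidef) (hρtr : ρ.trace = 1) :
    (ρ * P []).trace.re ≥
      (∑ k ∈ Finset.range (2 ^ m), (ρ * P (wordOf m k)).trace.re)
        - ((2 ^ m : ℝ) - 1) := by
  have main : ∀ j, j ≤ m →
      (∑ k ∈ Finset.range (2 ^ j), (ρ * P (wordOf j k)).trace.re) - ((2 ^ j : ℝ) - 1)
        ≤ (ρ * P []).trace.re := by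
    intro j
    induction j with
    | zero =>
      intro _
      simp [wordOf]
    | succ j ih =>
      intro hj
      have hjm : j ≤ m := by omega
      have step : (∑ k ∈ Finset.range (2 ^ (j + 1)), (ρ * P (wordOf (j + 1) k)).trace.re)
          ≤ (∑ k ∈ Finset.range (2 ^ j), (ρ * P (wordOf j k)).trace.re) + 2 ^ j := by
        have h2 : (2 : ℕ) ^ (j + 1) = 2 * 2 ^ j := by ring
        rw [h2, sum_range_two_mul]
        have : ∀ q ∈ Finset.range (2 ^ j),
            (ρ * P (wordOf (j + 1) (2 * q))).trace.re
              + (ρ * P (wordOf (j + 1) (2 * q + 1))).trace.re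
            ≤ (ρ * P (wordOf j q)).trace.re + 1 := by
          intro q _
          rw [wordOf_two_mul, wordOf_two_mul_add_one]
          have hlen : (wordOf j q).length < m := by rw [wordOf_length]; omega
          have hlen0 : (wordOf j q ++ [false]).length ≤ m := by simp [wordOf_length]; omega
          have hlen1 : (wordOf j q ++ [true]).length ≤ m := by simp [wordOf_length]; omega
          obtain ⟨h01, h10⟩ := hsib _ hlen
          exact key_ineq hρ hρtr (hproj _ hlen0).1 (hproj _ hlen1).1
            (hproj _ hlen0).2 (hproj _ hlen1).2 h01 h10
        calc ∑ q ∈ Finset.range (2 ^ j),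
              ((ρ * P (wordOf (j + 1) (2 * q))).trace.re
                + (ρ * P (wordOf (j + 1) (2 * q + 1))).trace.re)
            ≤ ∑ q ∈ Finset.range (2 ^ j), ((ρ * P (wordOf j q)).trace.re + 1) :=
              Finset.sum_le_sum this
          _ = (∑ q ∈ Finset.range (2 ^ j), (ρ * P (wordOf j q)).trace.re) + 2 ^ j := by
              rw [Finset.sum_add_distrib]; simp
      have hpow : ((2 : ℝ) ^ (j + 1)) = 2 * 2 ^ j := by ring
      have := ih hjm
      rw [hpow]
      linarith
  exact main m le_rfl
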